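/- Let A and B be associative rings with identity, f : A → B a ring homomorphism, and J a proper two-sided ideal of B. Assume J contains a regular central element of B. Then the amalgamation A⋈fJ is a weak Armendariz ring if and only if both A and the subring f(A)+J of B are weak Armendariz rings. -/

import Mathlib

open Polynomial

/-- A ring `R` is Armendariz if whenever `p * q = 0` for polynomials over `R`,
every product of a coefficient of `p` with a coefficient of `q` is zero. -/
def IsArmendariz (R : Type*) [Ring R] : Prop :=
  ∀ p q : R[X], p * q = 0 → ∀ i j : ℕ, p.coeff i * q.coeff j = 0

/-- A ring `R` is nil-Armendariz if whenever every coefficient of `p * q` is nilpotent,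
every product of a coefficient of `p` with a coefficient of `q` is nilpotent. -/
def IsNilArmendariz (R : Type*) [Ring R] : Prop :=
  ∀ p q : R[X], (∀ k : ℕ, IsNilpotent ((p * q).coeff k)) →
    ∀ i j : ℕ, IsNilpotent (p.coeff i * q.coeff j)

/-- A ring `R` is weak Armendariz if whenever `p * q = 0` for polynomials over `R`,
every product of a coefficient of `p` with a coefficient of `q` is nilpotent. -/
def IsWeakArmendariz (R : Type*) [Ring R] : Prop :=
  ∀ p q : R[X], p * q = 0 → ∀ i j : ℕ, IsNilpotent (p.coeff i * q.coeff j)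

/-- The amalgamation `A ⋈^f J = {(a, f a + j) | a ∈ A, j ∈ J}` of `A` and `B` along the
two-sided ideal `J` with respect to `f`, as a subring of `A × B`.  (A pair `(a, b)` has the
form `(a, f a + j)` with `j ∈ J` iff `b - f a ∈ J`.) -/
def amalgamation {A B : Type*} [Ring A] [Ring B] (f : A →+* B) (J : TwoSidedIdeal B) :
    Subring (A × B) where
  carrier := {p | p.2 - f p.1 ∈ J}
  zero_mem' := by simp [J.zero_mem]
  one_mem' := by simp [J.zero_mem]
  add_mem' := by
    intro x y hx hy
    have e : (x + y).2 - f ((x + y).1) = (x.2 - f x.1) + (y.2 - f y.1) := by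
      simp only [Prod.snd_add, Prod.fst_add, map_add]; abel
    show (x + y).2 - f ((x + y).1) ∈ J
    rw [e]; exact J.add_mem hx hy
  neg_mem' := by
    intro x hx
    have e : (-x).2 - f ((-x).1) = -(x.2 - f x.1) := by
      simp only [Prod.snd_neg, Prod.fst_neg, map_neg]; abel
    show (-x).2 - f ((-x).1) ∈ J
    rw [e]; exact J.neg_mem hx
  mul_mem' := by
    intro x y hx hy
    have e : (x * y).2 - f ((x * y).1) = x.2 * (y.2 - f y.1) + (x.2 - f x.1) * f y.1 := by
      simp only [Prod.snd_mul, Prod.fst_mul, map_mul, mul_sub, sub_mul]; abel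
    show (x * y).2 - f ((x * y).1) ∈ J
    rw [e]; exact J.add_mem (J.mul_mem_left _ _ hy) (J.mul_mem_right _ _ hx)

/-- The subring `f(A) + J = {f a + j | a ∈ A, j ∈ J}` of `B`.  (An element `b` has the form
`f a + j` with `j ∈ J` iff `b - f a ∈ J` for some `a`.) -/
def imageAddIdeal {A B : Type*} [Ring A] [Ring B] (f : A →+* B) (J : TwoSidedIdeal B) :
    Subring B where
  carrier := {b | ∃ a : A, b - f a ∈ J}
  zero_mem' := ⟨0, by simp [J.zero_mem]⟩
  one_mem' := ⟨1, by simp [J.zero_mem]⟩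
  add_mem' := by
    rintro x y ⟨a, ha⟩ ⟨b, hb⟩
    refine ⟨a + b, ?_⟩
    have e : x + y - f (a + b) = (x - f a) + (y - f b) := by
      rw [map_add]; abel
    rw [e]; exact J.add_mem ha hb
  neg_mem' := by
    rintro x ⟨a, ha⟩
    refine ⟨-a, ?_⟩
    have e : -x - f (-a) = -(x - f a) := by rw [map_neg]; abel
    rw [e]; exact J.neg_mem ha
  mul_mem' := by
    rintro x y ⟨a, ha⟩ ⟨b, hb⟩
    refine ⟨a * b, ?_⟩
    have e : x * y - f (a * b) = x * (y - f b) + (x - f a) * f b := by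
      rw [map_mul, mul_sub, sub_mul]; abel
    rw [e]; exact J.add_mem (J.mul_mem_left _ _ hb) (J.mul_mem_right _ _ ha)

namespace Stmt14Aux

variable {A B : Type*} [Ring A] [Ring B] (f : A →+* B) (J : TwoSidedIdeal B)

/-- First projection of the amalgamation. -/
def proj1 : amalgamation f J →+* A := (RingHom.fst A B).comp (amalgamation f J).subtype

/-- Second projection of the amalgamation, landing in `f(A)+J`. -/
def proj2 : amalgamation f J →+* imageAddIdeal f J where
  toFun x := ⟨(x : A × B).2, (x : A × B).1, x.2⟩
  map_one' := rfl
  map_mul' _ _ := rfl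
  map_zero' := rfl
  map_add' _ _ := rfl

/-- Inclusion of `A` into the amalgamation. -/
def incl : A →+* amalgamation f J where
  toFun a := ⟨(a, f a), by show f a - f a ∈ J; simpa using J.zero_mem⟩
  map_one' := by apply Subtype.ext; simp
  map_mul' _ _ := by apply Subtype.ext; simp
  map_zero' := by apply Subtype.ext; simp
  map_add' _ _ := by apply Subtype.ext; simp

/-- Left multiplication by a fixed element `s ∈ J`, as an additive map
from `f(A)+J` into the amalgamation. -/
def mulL (s : B) (hsJ : s ∈ J) : imageAddIdeal f J →+ amalgamation f J where
  toFun b := ⟨(0, s * (b : B)), by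
    show s * (b : B) - f 0 ∈ J
    simpa using J.mul_mem_right _ _ hsJ⟩
  map_zero' := by apply Subtype.ext; simp
  map_add' _ _ := by apply Subtype.ext; simp [mul_add]

/-- Right multiplication by a fixed element `s ∈ J`, as an additive map
from `f(A)+J` into the amalgamation. -/
def mulR (s : B) (hsJ : s ∈ J) : imageAddIdeal f J →+ amalgamation f J where
  toFun b := ⟨(0, (b : B) * s), by
    show (b : B) * s - f 0 ∈ J
    simpa using J.mul_mem_left _ _ hsJ⟩
  map_zero' := by apply Subtype.ext; simp
  map_add' _ _ := by apply Subtype.ext; simp [add_mul]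

/-- Right multiplication by `s * s` for a fixed element `s ∈ J`, as an additive map
from `f(A)+J` into the amalgamation. -/
def mulLR (s : B) (hsJ : s ∈ J) : imageAddIdeal f J →+ amalgamation f J where
  toFun b := ⟨(0, (b : B) * (s * s)), by
    show (b : B) * (s * s) - f 0 ∈ J
    simpa using J.mul_mem_left _ _ (J.mul_mem_right _ _ hsJ)⟩
  map_zero' := by apply Subtype.ext; simp
  map_add' _ _ := by apply Subtype.ext; simp [add_mul]

/-- Apply an additive map coefficientwise to a polynomial. -/
noncomputable def polyMap {R S : Type*} [Ring R] [Ring S] (φ : R →+ S) (p : R[X]) : S[X] :=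
  Polynomial.ofFinsupp (AddMonoidAlgebra.ofCoeff (Finsupp.mapRange φ φ.map_zero p.toFinsupp.coeff))

theorem polyMap_coeff {R S : Type*} [Ring R] [Ring S] (φ : R →+ S) (p : R[X]) (n : ℕ) :
    (polyMap φ p).coeff n = φ (p.coeff n) := by
  simp [polyMap, Polynomial.coeff]

theorem cancel_pow_right {s : B} (hreg : ∀ b : B, b * s = 0 → b = 0) :
    ∀ (m : ℕ) (x : B), x * s ^ m = 0 → x = 0 := by
  intro m
  induction m with
  | zero => intro x hx; simpa using hx
  | succ m ih =>
    intro x hx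
    rw [pow_succ, ← mul_assoc] at hx
    exact ih _ (hreg _ hx)

end Stmt14Aux

open Stmt14Aux in
theorem stmt_14 {A B : Type*} [Ring A] [Ring B] (f : A →+* B) (J : TwoSidedIdeal B)
    (hJ : (1 : B) ∉ J)
    (hs : ∃ s ∈ J, (∀ b : B, s * b = b * s) ∧
      (∀ b : B, s * b = 0 → b = 0) ∧ (∀ b : B, b * s = 0 → b = 0)) :
    IsWeakArmendariz (amalgamation f J) ↔ IsWeakArmendariz A ∧ IsWeakArmendariz (imageAddIdeal f J) := by
  obtain ⟨s, hsJ, hcomm, hregL, hregR⟩ := hs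
  have key : ∀ a b : B, s * a * (b * s) = a * b * (s * s) := by
    intro a b
    rw [hcomm a, mul_assoc a s, ← mul_assoc s b s, hcomm b, mul_assoc b s s,
      ← mul_assoc a b (s * s)]
  constructor
  · intro hR
    constructor
    · -- A is weak Armendariz
      intro p q hpq i j
      have h0 : (p.map (incl f J)) * (q.map (incl f J)) = 0 := by
        rw [← Polynomial.map_mul, hpq, Polynomial.map_zero]
      have := hR _ _ h0 i j
      rw [coeff_map, coeff_map, ← map_mul] at this
      obtain ⟨n, hn⟩ := this
      refine ⟨n, ?_⟩
      have h1 := congrArg (fun x : amalgamation f J => ((x : A × B)).1) hn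
      simpa [incl, SubmonoidClass.coe_pow, Prod.pow_fst] using h1
    · -- f(A)+J is weak Armendariz
      intro p q hpq i j
      set P : (amalgamation f J)[X] := polyMap (mulL f J s hsJ) p with hP
      set Q : (amalgamation f J)[X] := polyMap (mulR f J s hsJ) q with hQ
      have hcoeff : ∀ a b : ℕ, P.coeff a * Q.coeff b
          = mulLR f J s hsJ (p.coeff a * q.coeff b) := by
        intro a b
        rw [hP, hQ, polyMap_coeff, polyMap_coeff]
        apply Subtype.ext
        apply Prod.ext
        · show (0 : A) * 0 = 0
          simp
        · show s * (p.coeff a : B) * ((q.coeff b : B) * s) = _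
          push_cast
          exact key _ _
      have hPQ : P * Q = 0 := by
        refine Polynomial.ext fun k => ?_
        rw [Polynomial.coeff_mul, Polynomial.coeff_zero,
          Finset.sum_congr rfl (fun x _ => hcoeff x.1 x.2), ← map_sum,
          ← Polynomial.coeff_mul, hpq]
        simp
      obtain ⟨n, hn⟩ := hR P Q hPQ i j
      rw [hcoeff i j] at hn
      have h2 := congrArg (fun x : amalgamation f J => ((x : A × B)).2) hn
      simp only [SubmonoidClass.coe_pow, Prod.pow_snd] at h2
      have hval : ((mulLR f J s hsJ (p.coeff i * q.coeff j) : A × B)).2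
          = ((p.coeff i : B) * (q.coeff j : B)) * (s * s) := by
        show ((p.coeff i * q.coeff j : imageAddIdeal f J) : B) * (s * s) = _
        push_cast
        ring
      rw [hval] at h2
      have hxs : Commute ((p.coeff i : B) * (q.coeff j : B)) s := (hcomm _).symm
      rw [(hxs.mul_right hxs).mul_pow] at h2
      have h3 : ((p.coeff i : B) * (q.coeff j : B)) ^ n * s ^ (2 * n) = 0 := by
        rw [pow_mul, sq]
        simpa using h2
      have hz := cancel_pow_right hregR (2 * n) _ h3
      refine ⟨n, ?_⟩
      apply Subtype.ext
      show (((p.coeff i * q.coeff j) ^ n : imageAddIdeal f J) : B) = 0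
      push_cast
      exact hz
  · rintro ⟨hA, hS⟩ P Q hPQ i j
    have h1 : (P.map (proj1 f J)) * (Q.map (proj1 f J)) = 0 := by
      rw [← Polynomial.map_mul, hPQ, Polynomial.map_zero]
    have h2 : (P.map (proj2 f J)) * (Q.map (proj2 f J)) = 0 := by
      rw [← Polynomial.map_mul, hPQ, Polynomial.map_zero]
    obtain ⟨n, hn⟩ := hA _ _ h1 i j
    obtain ⟨m, hm⟩ := hS _ _ h2 i j
    rw [coeff_map, coeff_map, ← map_mul] at hn hm
    refine ⟨n + m, ?_⟩
    apply Subtype.ext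
    rw [SubmonoidClass.coe_pow]
    apply Prod.ext
    · rw [Prod.pow_fst]
      have e : ((P.coeff i * Q.coeff j : amalgamation f J) : A × B).1 =
          proj1 f J (P.coeff i * Q.coeff j) := rfl
      rw [e, pow_add, hn, zero_mul]
      simp
    · rw [Prod.pow_snd]
      have e : ((P.coeff i * Q.coeff j : amalgamation f J) : A × B).2 =
          ((proj2 f J (P.coeff i * Q.coeff j) : B)) := rfl
      have hm' : ((proj2 f J (P.coeff i * Q.coeff j) : B)) ^ m = 0 := by
        have := congrArg (Subtype.val) hm
        simpa using this
      rw [e, pow_add, hm', mul_zero]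
      simp
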